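/- For a monotone operator F on subsets of A and any H, X ⊆ A: if X ⊆ G_F(H ∪ X) then X ⊆ G_F(H) (the Accumulate rule of parameterized coinduction). -/
import Mathlib


def nuSet {A : Type*} (F : Set A → Set A) : Set A := ⋃₀ {R | R ⊆ F R}

def Gfp {A : Type*} (F : Set A → Set A) (H : Set A) : Set A :=
  nuSet (fun X => F (X ∪ H))

lemma nuSet_postfixed {A : Type*} {F : Set A → Set A} (hF : Monotone F) :
    nuSet F ⊆ F (nuSet F) := by
  intro x hx
  rw [nuSet, Set.mem_sUnion] at hx
  obtain ⟨R, hR, hxR⟩ := hx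
  refine hF (fun y hy => ?_) (hR hxR)
  rw [nuSet, Set.mem_sUnion]
  exact ⟨R, hR, hy⟩

theorem accumulate {A : Type*} (F : Set A → Set A) (_hF : Monotone F)
    (H X : Set A) (h : X ⊆ Gfp F (H ∪ X)) : X ⊆ Gfp F H := by
  set G := Gfp F (H ∪ X) with hG
  have hmono : Monotone (fun Y : Set A => F (Y ∪ (H ∪ X))) :=
    fun a b hab => _hF (Set.union_subset_union_left _ hab)
  have hpost : G ⊆ F (G ∪ (H ∪ X)) := nuSet_postfixed hmono
  have hsub : G ⊆ Gfp F H := by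
    intro x hx
    rw [Gfp, nuSet, Set.mem_sUnion]
    refine ⟨G, ?_, hx⟩
    intro y hy
    have : G ∪ (H ∪ X) = G ∪ H := by
      rw [Set.union_comm H X, ← Set.union_assoc, Set.union_eq_self_of_subset_right h]
    exact (this ▸ hpost) hy
  exact h.trans hsub
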